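/- Let β ∈ ℝ, M ≥ 3 an integer, and 1 ≤ n ≤ M−2. Then (M+1) ∫_{-1/2}^{1/2} Δ_{M+1}(x−β) · U_n(cos 2πx) · sin²(2πx) dx = (M−n+1) sin(2π(n+1)β) sin(2πβ) + cos(2π(n+2)β). -/

import Mathlib

open Real intervalIntegral

/-- Chebyshev polynomials of the second kind, as real functions. -/
noncomputable def chebU : ℕ → ℝ → ℝ
  | 0, _ => 1
  | 1, x => 2 * x
  | (n + 2), x => 2 * x * chebU (n + 1) x - chebU n x

/-- The Fejér kernel `Δ_M(x) = (1/M) (sin(πMx)/sin(πx))²`, extended by continuity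
(value `M`) at the points where `sin(πx) = 0`. -/
noncomputable def fejer (M : ℕ) (x : ℝ) : ℝ :=
  if Real.sin (Real.pi * x) = 0 then (M : ℝ)
  else (1 / (M : ℝ)) * (Real.sin (Real.pi * M * x) / Real.sin (Real.pi * x)) ^ 2

lemma chebU_sin : ∀ (n : ℕ) (θ : ℝ), chebU n (Real.cos θ) * Real.sin θ = Real.sin ((n+1) * θ)
  | 0, θ => by simp [chebU]
  | 1, θ => by
      simp only [chebU]
      push_cast
      rw [show ((1:ℝ)+1)*θ = 2*θ by ring, Real.sin_two_mul]; ring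
  | (n+2), θ => by
      have h1 := chebU_sin (n+1) θ
      have h2 := chebU_sin n θ
      simp only [chebU]
      push_cast at h1 h2 ⊢
      have key : Real.sin (((n:ℝ)+2+1)*θ) = 2 * Real.cos θ * Real.sin (((n:ℝ)+1+1)*θ) - Real.sin (((n:ℝ)+1)*θ) := by
        have e1 : ((n:ℝ)+2+1)*θ = ((n:ℝ)+1+1)*θ + θ := by ring
        have e2 : ((n:ℝ)+1)*θ = ((n:ℝ)+1+1)*θ - θ := by ring
        rw [e1, e2, Real.sin_add, Real.sin_sub]; ring
      rw [key, ← h1, ← h2]; ring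

lemma sin_sq_sub (A B : ℝ) : Real.sin A ^ 2 - Real.sin B ^ 2 = Real.sin (A+B) * Real.sin (A-B) := by
  rw [Real.sin_add, Real.sin_sub]
  nlinarith [Real.sin_sq_add_cos_sq A, Real.sin_sq_add_cos_sq B]

lemma dirichlet (N : ℕ) (y : ℝ) :
    Real.sin (π*y) * (1 + 2 * ∑ k ∈ Finset.range N, Real.cos (2*π*(k+1)*y))
      = Real.sin ((2*N+1)*π*y) := by
  induction N with
  | zero => simp
  | succ N ih =>
    rw [Finset.sum_range_succ]
    have e2 : 2 * Real.sin (π*y) * Real.cos (2*π*((N:ℝ)+1)*y)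
        = Real.sin ((2*((N:ℝ)+1)+1)*π*y) - Real.sin ((2*(N:ℝ)+1)*π*y) := by
      have a1 : (2*((N:ℝ)+1)+1)*π*y = 2*π*((N:ℝ)+1)*y + π*y := by ring
      have a2 : (2*(N:ℝ)+1)*π*y = 2*π*((N:ℝ)+1)*y - π*y := by ring
      rw [a1, a2, Real.sin_add, Real.sin_sub]; ring
    push_cast
    push_cast at ih e2
    nlinarith [ih, e2]

lemma fejer_sum_sq (M : ℕ) (y : ℝ) :
    Real.sin (π*y) ^ 2 * (((M:ℝ)+1) + 2 * ∑ k ∈ Finset.range M, ((M:ℝ)-k) * Real.cos (2*π*(k+1)*y))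
      = Real.sin (π*((M:ℝ)+1)*y) ^ 2 := by
  induction M with
  | zero => simp
  | succ M ih =>
    have hd := dirichlet (M+1) y
    have hs : Real.sin (π*((M:ℝ)+1+1)*y) ^ 2 - Real.sin (π*((M:ℝ)+1)*y) ^ 2
        = Real.sin ((2*((M:ℝ)+1)+1)*π*y) * Real.sin (π*y) := by
      have := sin_sq_sub (π*((M:ℝ)+1+1)*y) (π*((M:ℝ)+1)*y)
      rw [this]
      ring_nf
    -- rewrite the sum for M+1 in terms of sum for M plus Dirichlet pieces
    have hsum : ∑ k ∈ Finset.range (M+1), (((M:ℝ)+1)-k) * Real.cos (2*π*(k+1)*y)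
        = (∑ k ∈ Finset.range M, ((M:ℝ)-k) * Real.cos (2*π*(k+1)*y))
          + ∑ k ∈ Finset.range (M+1), Real.cos (2*π*(k+1)*y) := by
      push_cast
      rw [Finset.sum_range_succ, Finset.sum_range_succ (fun k : ℕ => Real.cos (2*π*((k:ℝ)+1)*y)), ← add_assoc, ← Finset.sum_add_distrib]
      congr 1
      · apply Finset.sum_congr rfl; intro k _; ring
      · ring
    push_cast
    push_cast at ih hd hs hsum
    rw [hsum]
    linear_combination ih + Real.sin (π*y) * hd - hs

lemma fejer_eq (M : ℕ) (y : ℝ) :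
    ((M:ℝ)+1) * fejer (M+1) y
      = ((M:ℝ)+1) + 2 * ∑ k ∈ Finset.range M, ((M:ℝ)-k) * Real.cos (2*π*(k+1)*y) := by
  unfold fejer
  by_cases h : Real.sin (π * y) = 0
  · rw [if_pos h]
    rw [Real.sin_eq_zero_iff] at h
    obtain ⟨j, hj⟩ := h
    have hy : y = (j:ℝ) := by
      have hπ : (π:ℝ) ≠ 0 := Real.pi_ne_zero
      have h2 : π * y = π * (j:ℝ) := by linarith [hj]
      exact mul_left_cancel₀ hπ h2
    subst hy
    have hc : ∀ k : ℕ, Real.cos (2*π*((k:ℝ)+1)*(j:ℝ)) = 1 := by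
      intro k
      have : 2*π*((k:ℝ)+1)*(j:ℝ) = (((k:ℕ)+1 : ℤ)*j : ℤ) * (2*π) := by push_cast; ring
      rw [this, Real.cos_int_mul_two_pi]
    simp only [hc, mul_one]
    have hgs : ∑ k ∈ Finset.range M, ((M:ℝ)-k) = (M:ℝ)*(M+1)/2 := by
      rw [Finset.sum_sub_distrib, Finset.sum_const, Finset.card_range]
      have : ∑ k ∈ Finset.range M, (k:ℝ) = (M:ℝ)*(M-1)/2 := by
        induction M with
        | zero => simp
        | succ m ihm => rw [Finset.sum_range_succ, ihm]; push_cast; ring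
      rw [this]; push_cast; ring
    rw [hgs]
    push_cast
    ring
  · rw [if_neg h]
    have h2 : Real.sin (π * y) ^ 2 ≠ 0 := pow_ne_zero _ h
    have hM1 : ((M:ℝ)+1) ≠ 0 := by positivity
    have key := fejer_sum_sq M y
    have harg : (π * ((M+1:ℕ):ℝ) * y) = π*((M:ℝ)+1)*y := by push_cast; ring
    rw [harg]
    field_simp
    push_cast
    ring_nf at key ⊢
    linear_combination (-((M:ℝ)+1)) * key

lemma int_cos_lin (j : ℤ) (c : ℝ) :
    ∫ x in (-1/2:ℝ)..(1/2), Real.cos (2*π*j*x - c) = if j = 0 then Real.cos c else 0 := by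
  by_cases hj : j = 0
  · subst hj
    simp only [Int.cast_zero, mul_zero, zero_mul, zero_sub, Real.cos_neg]
    rw [intervalIntegral.integral_const]
    norm_num
  · rw [if_neg hj]
    have hj' : (2*π*(j:ℝ)) ≠ 0 := by
      have := Real.pi_ne_zero
      have : (j:ℝ) ≠ 0 := Int.cast_ne_zero.mpr hj
      positivity
    have key : ∀ x ∈ Set.uIcc (-1/2:ℝ) (1/2),
        HasDerivAt (fun x => Real.sin (2*π*j*x - c) / (2*π*j)) (Real.cos (2*π*j*x - c)) x := by
      intro x _
      have h1 : HasDerivAt (fun x : ℝ => 2*π*j*x - c) (2*π*j) x := by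
        simpa using ((hasDerivAt_id x).const_mul (2*π*(j:ℝ))).sub_const c
      have h2 := (h1.sin).div_const (2*π*(j:ℝ))
      simpa [mul_div_assoc, mul_div_cancel_right₀, hj'] using h2
    rw [intervalIntegral.integral_eq_sub_of_hasDerivAt key
      (by apply Continuous.intervalIntegrable; continuity)]
    have e1 : 2*π*(j:ℝ)*(1/2) - c = (j:ℝ)*π - c := by ring
    have e2 : 2*π*(j:ℝ)*(-1/2) - c = -((j:ℝ)*π + c) := by ring
    rw [e1, e2, Real.sin_sub, Real.sin_neg, Real.sin_add, Real.sin_int_mul_pi]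
    ring

lemma int_cos_shift (k m : ℕ) (hm : 1 ≤ m) (β : ℝ) :
    ∫ x in (-1/2:ℝ)..(1/2), Real.cos (2*π*k*(x-β)) * Real.cos (2*π*m*x)
      = if k = m then Real.cos (2*π*k*β)/2 else 0 := by
  have hptwise : ∀ x : ℝ, Real.cos (2*π*k*(x-β)) * Real.cos (2*π*m*x)
      = (Real.cos (2*π*((k:ℤ)+m)*x - 2*π*k*β) + Real.cos (2*π*((k:ℤ)-m)*x - 2*π*k*β)) / 2 := by
    intro x
    have a1 : (2*π*(((k:ℤ):ℝ)+m)*x - 2*π*k*β) = (2*π*k*(x-β)) + 2*π*m*x := by push_cast; ring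
    have a2 : (2*π*(((k:ℤ):ℝ)-m)*x - 2*π*k*β) = (2*π*k*(x-β)) - 2*π*m*x := by push_cast; ring
    rw [a1, a2, Real.cos_add, Real.cos_sub]; ring
  rw [intervalIntegral.integral_congr (g := fun x =>
      (Real.cos (2*π*((k:ℤ)+m)*x - 2*π*k*β) + Real.cos (2*π*((k:ℤ)-m)*x - 2*π*k*β)) / 2)
      (fun x _ => hptwise x)]
  rw [intervalIntegral.integral_div, intervalIntegral.integral_add
      (by apply Continuous.intervalIntegrable; continuity)
      (by apply Continuous.intervalIntegrable; continuity)]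
  have A := int_cos_lin ((k:ℤ)+m) (2*π*k*β)
  have B := int_cos_lin ((k:ℤ)-m) (2*π*k*β)
  push_cast at A B
  push_cast
  rw [A, B]
  have h1 : ¬((k:ℤ)+m = 0) := by omega
  rw [if_neg h1]
  by_cases h : k = m
  · subst h
    rw [if_pos (by omega), if_pos rfl]; ring
  · rw [if_neg (by omega), if_neg h]; norm_num

lemma int_cos_nat (m : ℕ) (hm : 1 ≤ m) :
    ∫ x in (-1/2:ℝ)..(1/2), Real.cos (2*π*(m:ℝ)*x) = 0 := by
  have h := int_cos_lin (m:ℤ) 0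
  rw [if_neg (by omega : ¬((m:ℤ) = 0))] at h
  push_cast at h
  simpa using h

set_option maxHeartbeats 1000000 in
theorem stmt7 (β : ℝ) (M : ℕ) (hM : 3 ≤ M) (n : ℕ) (hn : 1 ≤ n) (hnM : n + 2 ≤ M) :
    ((M : ℝ) + 1) * ∫ x in (-1/2 : ℝ)..(1/2),
        fejer (M + 1) (x - β) * chebU n (Real.cos (2 * Real.pi * x)) *
          (Real.sin (2 * Real.pi * x)) ^ 2
      = ((M : ℝ) - n + 1) * Real.sin (2 * Real.pi * (n + 1) * β) * Real.sin (2 * Real.pi * β)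
        + Real.cos (2 * Real.pi * (n + 2) * β) := by
  rw [← intervalIntegral.integral_const_mul]
  set G : ℝ → ℝ := fun x =>
    ((M:ℝ)+1) * ((Real.cos (2*π*(n:ℝ)*x) - Real.cos (2*π*((n:ℝ)+2)*x))/2)
    + ∑ k ∈ Finset.range M, ((M:ℝ)-k) *
        (Real.cos (2*π*((k:ℝ)+1)*(x-β)) * Real.cos (2*π*(n:ℝ)*x)
          - Real.cos (2*π*((k:ℝ)+1)*(x-β)) * Real.cos (2*π*((n:ℝ)+2)*x)) with hG
  have hcongr : ∀ x : ℝ, ((M:ℝ)+1) * (fejer (M+1) (x-β) * chebU n (Real.cos (2*π*x)) *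
      (Real.sin (2*π*x))^2) = G x := by
    intro x
    have hcs := chebU_sin n (2*π*x)
    have hss : Real.sin (((n:ℝ)+1) * (2*π*x)) * Real.sin (2*π*x)
        = (Real.cos (2*π*(n:ℝ)*x) - Real.cos (2*π*((n:ℝ)+2)*x))/2 := by
      have b1 : 2*π*(n:ℝ)*x = ((n:ℝ)+1)*(2*π*x) - 2*π*x := by ring
      have b2 : 2*π*((n:ℝ)+2)*x = ((n:ℝ)+1)*(2*π*x) + 2*π*x := by ring
      rw [b1, b2, Real.cos_sub, Real.cos_add]; ring
    calc ((M:ℝ)+1) * (fejer (M+1) (x-β) * chebU n (Real.cos (2*π*x)) * (Real.sin (2*π*x))^2)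
        = (((M:ℝ)+1) * fejer (M+1) (x-β)) *
            ((chebU n (Real.cos (2*π*x)) * Real.sin (2*π*x)) * Real.sin (2*π*x)) := by ring
      _ = (((M:ℝ)+1) + 2 * ∑ k ∈ Finset.range M, ((M:ℝ)-k) * Real.cos (2*π*((k:ℝ)+1)*(x-β))) *
            (Real.sin (((n:ℝ)+1) * (2*π*x)) * Real.sin (2*π*x)) := by
          rw [fejer_eq M (x-β), hcs]
      _ = (((M:ℝ)+1) + 2 * ∑ k ∈ Finset.range M, ((M:ℝ)-k) * Real.cos (2*π*((k:ℝ)+1)*(x-β))) *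
            ((Real.cos (2*π*(n:ℝ)*x) - Real.cos (2*π*((n:ℝ)+2)*x))/2) := by rw [hss]
      _ = G x := by
          simp only [hG]
          have expand : (((M:ℝ)+1) + 2 * ∑ k ∈ Finset.range M, ((M:ℝ)-k) * Real.cos (2*π*((k:ℝ)+1)*(x-β))) *
              ((Real.cos (2*π*(n:ℝ)*x) - Real.cos (2*π*((n:ℝ)+2)*x))/2)
            = ((M:ℝ)+1) * ((Real.cos (2*π*(n:ℝ)*x) - Real.cos (2*π*((n:ℝ)+2)*x))/2)
              + ∑ k ∈ Finset.range M, (((M:ℝ)-k) * Real.cos (2*π*((k:ℝ)+1)*(x-β))) *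
                  (2 * ((Real.cos (2*π*(n:ℝ)*x) - Real.cos (2*π*((n:ℝ)+2)*x))/2)) := by
            rw [← Finset.sum_mul]; ring
          rw [expand]
          congr 1
          apply Finset.sum_congr rfl; intro k _; ring
  rw [intervalIntegral.integral_congr (g := G) (fun x _ => hcongr x)]
  -- now integrate G
  have hint1 : IntervalIntegrable (fun x => ((M:ℝ)+1) *
      ((Real.cos (2*π*(n:ℝ)*x) - Real.cos (2*π*((n:ℝ)+2)*x))/2)) MeasureTheory.volume (-1/2:ℝ) (1/2) := by
    apply Continuous.intervalIntegrable; fun_prop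
  have hint2 : IntervalIntegrable (fun x => ∑ k ∈ Finset.range M, ((M:ℝ)-k) *
        (Real.cos (2*π*((k:ℝ)+1)*(x-β)) * Real.cos (2*π*(n:ℝ)*x)
          - Real.cos (2*π*((k:ℝ)+1)*(x-β)) * Real.cos (2*π*((n:ℝ)+2)*x)))
      MeasureTheory.volume (-1/2:ℝ) (1/2) := by
    apply Continuous.intervalIntegrable
    apply continuous_finset_sum
    intro k _; fun_prop
  rw [hG, intervalIntegral.integral_add hint1 hint2]
  have hI1 : (∫ x in (-1/2:ℝ)..(1/2), ((M:ℝ)+1) *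
      ((Real.cos (2*π*(n:ℝ)*x) - Real.cos (2*π*((n:ℝ)+2)*x))/2)) = 0 := by
    rw [intervalIntegral.integral_const_mul, intervalIntegral.integral_div,
      intervalIntegral.integral_sub (by apply Continuous.intervalIntegrable; fun_prop)
        (by apply Continuous.intervalIntegrable; fun_prop)]
    have a1 := int_cos_nat n hn
    have a2 := int_cos_nat (n+2) (by omega)
    push_cast at a2
    rw [a1, a2]
    ring
  have hI2 : (∫ x in (-1/2:ℝ)..(1/2), ∑ k ∈ Finset.range M, ((M:ℝ)-k) *
        (Real.cos (2*π*((k:ℝ)+1)*(x-β)) * Real.cos (2*π*(n:ℝ)*x)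
          - Real.cos (2*π*((k:ℝ)+1)*(x-β)) * Real.cos (2*π*((n:ℝ)+2)*x)))
      = ∑ k ∈ Finset.range M, ((M:ℝ)-k) *
          ((if k+1 = n then Real.cos (2*π*((k:ℝ)+1)*β)/2 else 0)
            - (if k+1 = n+2 then Real.cos (2*π*((k:ℝ)+1)*β)/2 else 0)) := by
    rw [intervalIntegral.integral_finset_sum
      (fun k _ => by apply Continuous.intervalIntegrable; fun_prop)]
    apply Finset.sum_congr rfl; intro k _
    rw [intervalIntegral.integral_const_mul,
      intervalIntegral.integral_sub (by apply Continuous.intervalIntegrable; fun_prop)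
        (by apply Continuous.intervalIntegrable; fun_prop)]
    have A := int_cos_shift (k+1) n hn β
    have B := int_cos_shift (k+1) (n+2) (by omega) β
    push_cast at A B
    rw [A, B]
    simp only [show (k+1 = n+2) ↔ (k = n+1) by omega]
  rw [hI1, hI2, zero_add]
  -- evaluate the sum
  have hsum : ∑ k ∈ Finset.range M, ((M:ℝ)-k) *
          ((if k+1 = n then Real.cos (2*π*((k:ℝ)+1)*β)/2 else 0)
            - (if k+1 = n+2 then Real.cos (2*π*((k:ℝ)+1)*β)/2 else 0))
      = ((M:ℝ)-((n:ℝ)-1)) * (Real.cos (2*π*(n:ℝ)*β)/2)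
        - ((M:ℝ)-((n:ℝ)+1)) * (Real.cos (2*π*((n:ℝ)+2)*β)/2) := by
    have split : ∀ k ∈ Finset.range M, ((M:ℝ)-k) *
          ((if k+1 = n then Real.cos (2*π*((k:ℝ)+1)*β)/2 else 0)
            - (if k+1 = n+2 then Real.cos (2*π*((k:ℝ)+1)*β)/2 else 0))
        = (if k = n-1 then ((M:ℝ)-k) * (Real.cos (2*π*((k:ℝ)+1)*β)/2) else 0)
          - (if k = n+1 then ((M:ℝ)-k) * (Real.cos (2*π*((k:ℝ)+1)*β)/2) else 0) := by
      intro k _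
      simp only [show (k+1 = n) ↔ (k = n-1) by omega, show (k+1 = n+2) ↔ (k = n+1) by omega]
      split_ifs with h1 h2 <;> first | ring | (exfalso; omega)
    rw [Finset.sum_congr rfl split, Finset.sum_sub_distrib,
      Finset.sum_ite_eq' (Finset.range M) (n-1)
        (fun k => ((M:ℝ)-k) * (Real.cos (2*π*((k:ℝ)+1)*β)/2)),
      Finset.sum_ite_eq' (Finset.range M) (n+1)
        (fun k => ((M:ℝ)-k) * (Real.cos (2*π*((k:ℝ)+1)*β)/2)),
      if_pos (Finset.mem_range.mpr (by omega)), if_pos (Finset.mem_range.mpr (by omega))]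
    have hc : ((n-1:ℕ):ℝ) = (n:ℝ)-1 := by
      rw [Nat.cast_sub hn]; norm_num
    rw [hc]
    have hc2 : ((n:ℝ)-1)+1 = (n:ℝ) := by ring
    rw [hc2]
    push_cast
    ring_nf
  rw [hsum]
  have hrhs : Real.sin (2*π*((n:ℝ)+1)*β) * Real.sin (2*π*β)
      = (Real.cos (2*π*(n:ℝ)*β) - Real.cos (2*π*((n:ℝ)+2)*β))/2 := by
    have b1 : 2*π*(n:ℝ)*β = 2*π*((n:ℝ)+1)*β - 2*π*β := by ring
    have b2 : 2*π*((n:ℝ)+2)*β = 2*π*((n:ℝ)+1)*β + 2*π*β := by ring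
    rw [b1, b2, Real.cos_sub, Real.cos_add]; ring
  linear_combination (-((M:ℝ)-(n:ℝ)+1)) * hrhs
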